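/- Assume the restricted isometry constant of X satisfies δ_{k0} < 1. Let J ⊆ S be any subset of the true support with card(J) = k < k0, let u = S ∖ J, let P_J be the orthogonal projection of ℝⁿ onto the span of the columns of X indexed by J, and let r = y − P_J y. Then √(1−δ_{k0}) ‖β_u‖₂ − ‖w‖₂ ≤ ‖r‖₂ ≤ √(1+δ_{k0}) ‖β_u‖₂ + ‖w‖₂, where β_u ∈ ℝ^{card(u)} denotes the entries of β indexed by u. -/

import Mathlib

open MeasureTheory ProbabilityTheory Filter
open scoped ENNReal NNReal

noncomputable section

namespace RRTPaper

variable {n p : ℕ}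

/-- The support of a coefficient vector as a `Finset`. -/
def suppF {p : ℕ} (β : Fin p → ℝ) : Finset (Fin p) :=
  Finset.univ.filter fun j => β j ≠ 0

/-- `β_min`: the smallest absolute value of `β` on its support. -/
def betaMin {p : ℕ} (β : Fin p → ℝ) : ℝ :=
  sInf ((fun j => |β j|) '' {j | β j ≠ 0})

/-- `β_max`: the largest absolute value of `β` on its support. -/
def betaMax {p : ℕ} (β : Fin p → ℝ) : ℝ :=
  sSup ((fun j => |β j|) '' {j | β j ≠ 0})

/-- The ℓ2 norm of a coefficient vector. -/
def l2norm {p : ℕ} (b : Fin p → ℝ) : ℝ := Real.sqrt (∑ j, (b j) ^ 2)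

/-- The design matrix (given by its columns `X j ∈ ℝⁿ`) applied to a coefficient
vector: `Xb = ∑ j, b j • X j`. -/
def applyX (X : Fin p → EuclideanSpace ℝ (Fin n)) (b : Fin p → ℝ) :
    EuclideanSpace ℝ (Fin n) := ∑ j, b j • X j

/-- The set of admissible restricted isometry constants of order `s`:
`δ ≥ 0` such that `(1−δ)‖b‖₂² ≤ ‖Xb‖₂² ≤ (1+δ)‖b‖₂²` for every `b` with at most `s`
nonzero entries. -/
def ripSet (X : Fin p → EuclideanSpace ℝ (Fin n)) (s : ℕ) : Set ℝ :=
  {δ : ℝ | 0 ≤ δ ∧ ∀ b : Fin p → ℝ, (suppF b).card ≤ s →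
    (1 - δ) * (l2norm b) ^ 2 ≤ ‖applyX X b‖ ^ 2 ∧
      ‖applyX X b‖ ^ 2 ≤ (1 + δ) * (l2norm b) ^ 2}

/-- The restricted isometry constant `δ_s` of order `s` (the smallest admissible `δ`). -/
def RIC (X : Fin p → EuclideanSpace ℝ (Fin n)) (s : ℕ) : ℝ := sInf (ripSet X s)

/-- The OMP support estimate `S_k` after `k` iterations, given the sequence `t` of
selected indices (`t k` is the index selected at iteration `k+1`). -/
def ompSupport {p : ℕ} (t : ℕ → Fin p) (k : ℕ) : Finset (Fin p) :=
  (Finset.range k).image t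

/-- The OMP residual `r^k = y − P_k y`, where `P_k` is the orthogonal projection onto
the span of the columns indexed by `S_k`. -/
def ompResidual (X : Fin p → EuclideanSpace ℝ (Fin n)) (y : EuclideanSpace ℝ (Fin n))
    (t : ℕ → Fin p) (k : ℕ) : EuclideanSpace ℝ (Fin n) :=
  y - ↑(Submodule.orthogonalProjectionOnto (Submodule.span ℝ (X '' ↑(ompSupport t k))) y)

/-- `t` is a valid OMP selection sequence for design `X` and observation `y`:
at every iteration the selected index maximizes the absolute correlation with the
current residual. -/
def IsOMP (X : Fin p → EuclideanSpace ℝ (Fin n)) (y : EuclideanSpace ℝ (Fin n))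
    (t : ℕ → Fin p) : Prop :=
  ∀ k : ℕ, ∀ j : Fin p,
    |(inner ℝ (X j) (ompResidual X y t k) : ℝ)| ≤
      |(inner ℝ (X (t k)) (ompResidual X y t k) : ℝ)|

/-- The residual ratio statistic `RR(k) = ‖r^k‖₂ / ‖r^{k−1}‖₂`. -/
def resRatio (X : Fin p → EuclideanSpace ℝ (Fin n)) (y : EuclideanSpace ℝ (Fin n))
    (t : ℕ → Fin p) (k : ℕ) : ℝ :=
  ‖ompResidual X y t k‖ / ‖ompResidual X y t (k - 1)‖

/-- `k_min`: the first `1 ≤ k ≤ k_max` with `S ⊆ S_k` (`⊤ = ∞` if there is none). -/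
def kmin {p : ℕ} (t : ℕ → Fin p) (β : Fin p → ℝ) (kmax : ℕ) : ℕ∞ :=
  sInf ((fun k : ℕ => (k : ℕ∞)) ''
    {k | 1 ≤ k ∧ k ≤ kmax ∧ suppF β ⊆ ompSupport t k})

/-- The Beta function `B(a,b)`. -/
def betaFun (a b : ℝ) : ℝ := Real.Gamma a * Real.Gamma b / Real.Gamma (a + b)

/-- The CDF of the Beta(a,b) distribution. -/
def betaCDF (a b x : ℝ) : ℝ :=
  (1 / betaFun a b) * ∫ u in (0:ℝ)..x, u ^ (a - 1) * (1 - u) ^ (b - 1)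

/-- The inverse of the Beta(a,b) CDF on (0,1) (as a generalized inverse). -/
def betaICDF (a b z : ℝ) : ℝ := sInf {x : ℝ | 0 ≤ x ∧ z ≤ betaCDF a b x}

/-- The residual ratio threshold `Γ_RRT^α(k)`. -/
def GammaRRT (n p kmax : ℕ) (α : ℝ) (k : ℕ) : ℝ :=
  Real.sqrt (betaICDF (((n : ℝ) - k) / 2) (1 / 2)
    (α / ((kmax : ℝ) * ((p : ℝ) - k + 1))))

/-- `k_RRT = max{1 ≤ k ≤ k_max : RR(k) < Γ_RRT^α(k)}` (`0`, giving `S_RRT = ∅`,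
if the set is empty). -/
def kRRT (X : Fin p → EuclideanSpace ℝ (Fin n)) (y : EuclideanSpace ℝ (Fin n))
    (t : ℕ → Fin p) (kmax : ℕ) (α : ℝ) : ℕ :=
  WithBot.unbotD 0 ((Finset.Icc 1 kmax).filter fun k =>
    resRatio X y t k < GammaRRT n p kmax α k).max

/-- `k_RRM`: the smallest minimizer of `RR(k)` over `1 ≤ k ≤ k_max`. -/
def kRRM (X : Fin p → EuclideanSpace ℝ (Fin n)) (y : EuclideanSpace ℝ (Fin n))
    (t : ℕ → Fin p) (kmax : ℕ) : ℕ :=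
  sInf {k | k ∈ Finset.Icc 1 kmax ∧
    ∀ j ∈ Finset.Icc 1 kmax, resRatio X y t k ≤ resRatio X y t j}

/-- `min_{1 ≤ k ≤ k_max} RR(k)`. -/
def minRR (X : Fin p → EuclideanSpace ℝ (Fin n)) (y : EuclideanSpace ℝ (Fin n))
    (t : ℕ → Fin p) (kmax : ℕ) : ℝ :=
  sInf (resRatio X y t '' Set.Icc 1 kmax)

/-- The adaptive RRT parameter `α* = min(PFD_finite, (min_k RR(k))^q)`. -/
def alphaStar (X : Fin p → EuclideanSpace ℝ (Fin n)) (y : EuclideanSpace ℝ (Fin n))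
    (t : ℕ → Fin p) (kmax : ℕ) (PFD q : ℝ) : ℝ :=
  min PFD (minRR X y t kmax ^ q)

/-- `k_RRTA`: RRT with the adapted parameter `α*`. -/
def kRRTA (X : Fin p → EuclideanSpace ℝ (Fin n)) (y : EuclideanSpace ℝ (Fin n))
    (t : ℕ → Fin p) (kmax : ℕ) (PFD q : ℝ) : ℕ :=
  kRRT X y t kmax (alphaStar X y t kmax PFD q)

/-- `ε_omp` from Lemma 1 of the paper. -/
def epsOMP (X : Fin p → EuclideanSpace ℝ (Fin n)) (β : Fin p → ℝ) (k0 : ℕ) : ℝ :=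
  betaMin β * Real.sqrt (1 - RIC X (k0 + 1)) *
    (1 - Real.sqrt ((k0 : ℝ) + 1) * RIC X (k0 + 1)) /
    (1 + Real.sqrt (1 - RIC X (k0 + 1) ^ 2) - Real.sqrt ((k0 : ℝ) + 1) * RIC X (k0 + 1))

/-- `ε_σ = σ √(n + 2 √(n log n))`. -/
def epsSigma (n : ℕ) (σ : ℝ) : ℝ :=
  σ * Real.sqrt ((n : ℝ) + 2 * Real.sqrt ((n : ℝ) * Real.log (n : ℝ)))

/-- The distribution of the noise vector `w ~ N(0, σ² Iₙ)` on `ℝⁿ`. -/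
def noise (n : ℕ) (σ : ℝ) : Measure (EuclideanSpace ℝ (Fin n)) :=
  (Measure.pi fun _ : Fin n => gaussianReal 0 ⟨σ ^ 2, sq_nonneg σ⟩).map
    (MeasurableEquiv.toLp 2 (Fin n → ℝ))



section Statement16Aux

variable {n p : ℕ}

lemma applyX_add (X : Fin p → EuclideanSpace ℝ (Fin n)) (b c : Fin p → ℝ) :
    applyX X (b + c) = applyX X b + applyX X c := by
  simp [applyX, add_smul, Finset.sum_add_distrib]

lemma applyX_sub (X : Fin p → EuclideanSpace ℝ (Fin n)) (b c : Fin p → ℝ) :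
    applyX X (b - c) = applyX X b - applyX X c := by
  simp [applyX, sub_smul, Finset.sum_sub_distrib]

lemma applyX_smul (X : Fin p → EuclideanSpace ℝ (Fin n)) (a : ℝ) (b : Fin p → ℝ) :
    applyX X (a • b) = a • applyX X b := by
  simp [applyX, smul_smul, Finset.smul_sum]

lemma span_decomp (X : Fin p → EuclideanSpace ℝ (Fin n)) (J : Finset (Fin p)) :
    ∀ z ∈ Submodule.span ℝ (X '' ↑J), ∃ c : Fin p → ℝ,
      (∀ j ∉ J, c j = 0) ∧ applyX X c = z := by
  intro z hz
  induction hz using Submodule.span_induction with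
  | mem x hx =>
    obtain ⟨j, hj, rfl⟩ := hx
    refine ⟨fun i => if i = j then 1 else 0, fun i hi => ?_, ?_⟩
    · simp only [ite_eq_right_iff]; rintro rfl; exact absurd hj hi
    · simp [applyX, ite_smul]
  | zero => exact ⟨0, by simp, by simp [applyX]⟩
  | add x y hx hy ihx ihy =>
    obtain ⟨c1, h1, e1⟩ := ihx; obtain ⟨c2, h2, e2⟩ := ihy
    exact ⟨c1 + c2, fun j hj => by simp [h1 j hj, h2 j hj], by rw [applyX_add, e1, e2]⟩
  | smul a x hx ih =>
    obtain ⟨c, h, e⟩ := ih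
    exact ⟨a • c, fun j hj => by simp [h j hj], by rw [applyX_smul, e]⟩

lemma norm_sub_proj_le (V : Submodule ℝ (EuclideanSpace ℝ (Fin n)))
    (v : EuclideanSpace ℝ (Fin n)) :
    ‖v - ↑(Submodule.orthogonalProjectionOnto V v)‖ ≤ ‖v‖ := by
  set P := Submodule.orthogonalProjectionOnto V
  have h0 : (inner ℝ (v - ↑(P v)) (↑(P v) : EuclideanSpace ℝ (Fin n)) : ℝ) = 0 :=
    Submodule.starProjection_inner_eq_zero v _ (P v).2
  have hsq : ‖v‖ ^ 2 = ‖v - ↑(P v)‖ ^ 2 + ‖(↑(P v) : EuclideanSpace ℝ (Fin n))‖ ^ 2 := by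
    have h := norm_add_sq_real (v - ↑(P v)) (↑(P v) : EuclideanSpace ℝ (Fin n))
    rw [h0] at h
    simpa using h
  calc ‖v - ↑(P v)‖ = Real.sqrt (‖v - ↑(P v)‖ ^ 2) := (Real.sqrt_sq (norm_nonneg _)).symm
    _ ≤ Real.sqrt (‖v‖ ^ 2) := Real.sqrt_le_sqrt
        (by nlinarith [sq_nonneg ‖(↑(P v) : EuclideanSpace ℝ (Fin n))‖])
    _ = ‖v‖ := Real.sqrt_sq (norm_nonneg _)

lemma l2norm_sq (b : Fin p → ℝ) : (l2norm b) ^ 2 = ∑ j, (b j) ^ 2 :=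
  Real.sq_sqrt (Finset.sum_nonneg fun _ _ => sq_nonneg _)

lemma ripSet_nonempty (X : Fin p → EuclideanSpace ℝ (Fin n)) (hX : ∀ j, ‖X j‖ = 1) (s : ℕ) :
    (ripSet X s).Nonempty := by
  refine ⟨(p : ℝ) + 1, by positivity, fun b _ => ?_⟩
  have hsum : (l2norm b) ^ 2 = ∑ j, (b j) ^ 2 := l2norm_sq b
  have h1 : ‖applyX X b‖ ≤ ∑ j, |b j| := by
    calc ‖applyX X b‖ ≤ ∑ j, ‖b j • X j‖ := norm_sum_le _ _
      _ = ∑ j, |b j| := by simp [norm_smul, hX]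
  have h2 : (∑ j, |b j|) ^ 2 ≤ (Finset.univ : Finset (Fin p)).card * ∑ j, |b j| ^ 2 :=
    sq_sum_le_card_mul_sum_sq
  have h3 : ∀ j : Fin p, |b j| ^ 2 = (b j) ^ 2 := fun j => sq_abs _
  have hL : 0 ≤ ∑ j, (b j) ^ 2 := Finset.sum_nonneg fun _ _ => sq_nonneg _
  constructor
  · have h : (1 - ((p:ℝ) + 1)) * (l2norm b) ^ 2 ≤ 0 := by
      apply mul_nonpos_of_nonpos_of_nonneg
      · have : (0:ℝ) ≤ p := Nat.cast_nonneg p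
        linarith
      · exact sq_nonneg _
    exact le_trans h (sq_nonneg _)
  · have h4 : ‖applyX X b‖ ^ 2 ≤ (∑ j, |b j|) ^ 2 :=
      pow_le_pow_left₀ (norm_nonneg _) h1 2
    have h5 : (∑ j, |b j|) ^ 2 ≤ (p : ℝ) * ∑ j, (b j) ^ 2 := by
      simpa [h3] using h2
    rw [hsum]
    nlinarith

lemma ric_nonneg (X : Fin p → EuclideanSpace ℝ (Fin n)) (s : ℕ) : 0 ≤ RIC X s :=
  Real.sInf_nonneg fun _ hx => hx.1

lemma ric_spec (X : Fin p → EuclideanSpace ℝ (Fin n)) (hX : ∀ j, ‖X j‖ = 1) (s : ℕ)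
    (b : Fin p → ℝ) (hb : (suppF b).card ≤ s) :
    (1 - RIC X s) * (l2norm b) ^ 2 ≤ ‖applyX X b‖ ^ 2 ∧
      ‖applyX X b‖ ^ 2 ≤ (1 + RIC X s) * (l2norm b) ^ 2 := by
  have hne := ripSet_nonempty X hX s
  have hbdd : BddBelow (ripSet X s) := ⟨0, fun x hx => hx.1⟩
  have hL : 0 ≤ (l2norm b) ^ 2 := sq_nonneg _
  have key : ∀ ε : ℝ, 0 < ε →
      (1 - RIC X s) * ((l2norm b) ^ 2) ≤ ‖applyX X b‖ ^ 2 + ε ∧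
      ‖applyX X b‖ ^ 2 ≤ (1 + RIC X s) * ((l2norm b) ^ 2) + ε := by
    intro ε hε
    have hε' : 0 < ε / ((l2norm b) ^ 2 + 1) := by positivity
    obtain ⟨δ', hδ'mem, hδ'lt⟩ := Real.lt_sInf_add_pos hne hε'
    have hle : RIC X s ≤ δ' := csInf_le hbdd hδ'mem
    obtain ⟨hlow, hup⟩ := hδ'mem.2 b hb
    have h1 : (δ' - RIC X s) * ((l2norm b) ^ 2) ≤
        (ε / ((l2norm b) ^ 2 + 1)) * ((l2norm b) ^ 2) := by
      apply mul_le_mul_of_nonneg_right _ hL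
      have : δ' < RIC X s + ε / ((l2norm b) ^ 2 + 1) := hδ'lt
      linarith
    have h2 : (ε / ((l2norm b) ^ 2 + 1)) * ((l2norm b) ^ 2) ≤ ε := by
      rw [div_mul_eq_mul_div, div_le_iff₀ (by linarith)]
      nlinarith
    have e1 : (1 - RIC X s) * ((l2norm b) ^ 2) =
        (1 - δ') * ((l2norm b) ^ 2) + (δ' - RIC X s) * ((l2norm b) ^ 2) := by ring
    have e2 : (1 + δ') * ((l2norm b) ^ 2) =
        (1 + RIC X s) * ((l2norm b) ^ 2) + (δ' - RIC X s) * ((l2norm b) ^ 2) := by ring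
    constructor <;> linarith
  exact ⟨le_of_forall_pos_le_add fun ε hε => (key ε hε).1,
    le_of_forall_pos_le_add fun ε hε => (key ε hε).2⟩

end Statement16Aux

/-- If `δ_{k0} < 1`, `J ⊆ S` with `card(J) = k < k0`, `u = S ∖ J`, and
`r = y − P_J y` where `P_J` is the orthogonal projection onto the span of the columns of
`X` indexed by `J`, then `√(1−δ_{k0}) ‖β_u‖₂ − ‖w‖₂ ≤ ‖r‖₂ ≤ √(1+δ_{k0}) ‖β_u‖₂ + ‖w‖₂`. -/
theorem statement_16 {n p k0 : ℕ} (hnp : n < p) (hk0 : 1 ≤ k0)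
    (X : Fin p → EuclideanSpace ℝ (Fin n)) (hX : ∀ j, ‖X j‖ = 1)
    (β : Fin p → ℝ) (hβ : (suppF β).card = k0)
    (w : EuclideanSpace ℝ (Fin n))
    (hRIC : RIC X k0 < 1)
    (J : Finset (Fin p)) (hJ : J ⊆ suppF β) (k : ℕ) (hJk : J.card = k) (hkk0 : k < k0) :
    Real.sqrt (1 - RIC X k0) * Real.sqrt (∑ j ∈ suppF β \ J, (β j) ^ 2) - ‖w‖ ≤
      ‖applyX X β + w -
        ↑(Submodule.orthogonalProjectionOnto (Submodule.span ℝ (X '' ↑J)) (applyX X β + w))‖ ∧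
    ‖applyX X β + w -
        ↑(Submodule.orthogonalProjectionOnto (Submodule.span ℝ (X '' ↑J)) (applyX X β + w))‖ ≤
      Real.sqrt (1 + RIC X k0) * Real.sqrt (∑ j ∈ suppF β \ J, (β j) ^ 2) + ‖w‖ := by
  classical
  set V := Submodule.span ℝ (X '' ↑J) with hV
  set T := ∑ j ∈ suppF β \ J, (β j) ^ 2 with hTdef
  have hT : 0 ≤ T := Finset.sum_nonneg fun _ _ => sq_nonneg _
  have hδ0 : 0 ≤ RIC X k0 := ric_nonneg X k0
  set bu : Fin p → ℝ := fun j => if j ∈ suppF β \ J then β j else 0 with hbu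
  set bJ : Fin p → ℝ := fun j => if j ∈ J then β j else 0 with hbJ
  have hsplit : β = bJ + bu := by
    funext j
    by_cases h1 : j ∈ J
    · have h2 : j ∉ suppF β \ J := fun h => (Finset.mem_sdiff.1 h).2 h1
      simp only [hbJ, hbu, Pi.add_apply, if_pos h1, if_neg h2, add_zero]
    · by_cases h3 : j ∈ suppF β
      · have h6 : j ∈ suppF β \ J := Finset.mem_sdiff.2 ⟨h3, h1⟩
        simp only [hbJ, hbu, Pi.add_apply, if_neg h1, if_pos h6, zero_add]
      · have h4 : β j = 0 := by
          by_contra h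
          exact h3 (Finset.mem_filter.2 ⟨Finset.mem_univ j, h⟩)
        have h5 : j ∉ suppF β \ J := fun h => h3 (Finset.mem_sdiff.1 h).1
        simp only [hbJ, hbu, Pi.add_apply, if_neg h1, if_neg h5, add_zero, h4]
  have hbJV : applyX X bJ ∈ V := by
    have heq : applyX X bJ = ∑ j ∈ J, β j • X j := by
      simp [applyX, hbJ, ite_smul, Finset.sum_ite_mem]
    rw [heq]
    exact Submodule.sum_mem _ fun j hj =>
      Submodule.smul_mem _ _ (Submodule.subset_span ⟨j, hj, rfl⟩)
  have hy : applyX X β + w = applyX X bJ + (applyX X bu + w) := by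
    rw [hsplit, applyX_add]; abel
  have hPbJ : (↑(Submodule.orthogonalProjectionOnto V (applyX X bJ)) : EuclideanSpace ℝ (Fin n)) =
      applyX X bJ := Submodule.starProjection_eq_self_iff.mpr hbJV
  have hr : applyX X β + w - ↑(Submodule.orthogonalProjectionOnto V (applyX X β + w)) =
      (applyX X bu - ↑(Submodule.orthogonalProjectionOnto V (applyX X bu))) +
        (w - ↑(Submodule.orthogonalProjectionOnto V w)) := by
    rw [hy, map_add, map_add, Submodule.coe_add, Submodule.coe_add, hPbJ]
    abel
  -- ℓ2 norm of bu
  have hbu_l2 : (l2norm bu) ^ 2 = T := by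
    rw [l2norm_sq, hTdef]
    have : ∀ j : Fin p, (bu j) ^ 2 = if j ∈ suppF β \ J then (β j) ^ 2 else 0 := by
      intro j
      by_cases h : j ∈ suppF β \ J
      · simp only [hbu, if_pos h]
      · simp only [hbu, if_neg h]; norm_num
    simp only [this, Finset.sum_ite_mem, Finset.univ_inter]
  -- support bounds
  have hucard : (suppF β \ J).card = k0 - k := by
    rw [Finset.card_sdiff_of_subset hJ, hβ, hJk]
  have hbu_supp : suppF bu ⊆ suppF β \ J := by
    intro j hj
    rw [suppF, Finset.mem_filter] at hj
    by_contra hc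
    exact hj.2 (by simp only [hbu, if_neg hc])
  have hbu_card : (suppF bu).card ≤ k0 :=
    le_trans (le_trans (Finset.card_le_card hbu_supp) hucard.le) (Nat.sub_le _ _)
  -- upper bound pieces
  obtain ⟨_, hup⟩ := ric_spec X hX k0 bu hbu_card
  rw [hbu_l2] at hup
  have hXbu_norm : ‖applyX X bu‖ ≤ Real.sqrt (1 + RIC X k0) * Real.sqrt T := by
    calc ‖applyX X bu‖ = Real.sqrt (‖applyX X bu‖ ^ 2) :=
          (Real.sqrt_sq (norm_nonneg _)).symm
      _ ≤ Real.sqrt ((1 + RIC X k0) * T) := Real.sqrt_le_sqrt hup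
      _ = Real.sqrt (1 + RIC X k0) * Real.sqrt T := Real.sqrt_mul (by linarith) T
  have hw' : ‖w - ↑(Submodule.orthogonalProjectionOnto V w)‖ ≤ ‖w‖ := norm_sub_proj_le V w
  -- lower bound pieces
  obtain ⟨c, hc0, hcX⟩ := span_decomp X J _
    (Submodule.orthogonalProjectionOnto V (applyX X bu)).2
  have ha_eq : applyX X bu - ↑(Submodule.orthogonalProjectionOnto V (applyX X bu)) =
      applyX X (bu - c) := by rw [applyX_sub, hcX]
  have hsubc : suppF (bu - c) ⊆ (suppF β \ J) ∪ J := by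
    intro j hj
    rw [suppF, Finset.mem_filter] at hj
    have hj2 : bu j - c j ≠ 0 := by simpa using hj.2
    by_contra hcc
    simp only [Finset.mem_union, not_or] at hcc
    exact hj2 (by rw [hc0 j hcc.2]; simp only [hbu, if_neg hcc.1, sub_zero])
  have hcard2 : (suppF (bu - c)).card ≤ k0 := by
    calc (suppF (bu - c)).card ≤ ((suppF β \ J) ∪ J).card :=
          Finset.card_le_card hsubc
      _ ≤ (suppF β \ J).card + J.card := Finset.card_union_le _ _
      _ = (k0 - k) + k := by rw [hucard, hJk]
      _ = k0 := Nat.sub_add_cancel hkk0.le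
  have hl2lower : T ≤ (l2norm (bu - c)) ^ 2 := by
    rw [l2norm_sq]
    calc T = ∑ j ∈ suppF β \ J, ((bu - c) j) ^ 2 := by
          refine Finset.sum_congr rfl fun j hj => ?_
          have hjJ : j ∉ J := (Finset.mem_sdiff.1 hj).2
          simp only [Pi.sub_apply, hc0 j hjJ, sub_zero, hbu, if_pos hj]
      _ ≤ ∑ j, ((bu - c) j) ^ 2 :=
          Finset.sum_le_sum_of_subset_of_nonneg (Finset.subset_univ _)
            (fun j _ _ => sq_nonneg _)
  obtain ⟨hlow, _⟩ := ric_spec X hX k0 (bu - c) hcard2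
  have ha_lower : Real.sqrt (1 - RIC X k0) * Real.sqrt T ≤
      ‖applyX X bu - ↑(Submodule.orthogonalProjectionOnto V (applyX X bu))‖ := by
    rw [ha_eq]
    have h1 : (1 - RIC X k0) * T ≤ ‖applyX X (bu - c)‖ ^ 2 :=
      le_trans (mul_le_mul_of_nonneg_left hl2lower (by linarith)) hlow
    calc Real.sqrt (1 - RIC X k0) * Real.sqrt T
        = Real.sqrt ((1 - RIC X k0) * T) := (Real.sqrt_mul (by linarith) T).symm
      _ ≤ Real.sqrt (‖applyX X (bu - c)‖ ^ 2) := Real.sqrt_le_sqrt h1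
      _ = ‖applyX X (bu - c)‖ := Real.sqrt_sq (norm_nonneg _)
  set a := applyX X bu - ↑(Submodule.orthogonalProjectionOnto V (applyX X bu)) with ha
  set bb := w - (↑(Submodule.orthogonalProjectionOnto V w) : EuclideanSpace ℝ (Fin n)) with hbb
  have htri : ‖a‖ ≤ ‖a + bb‖ + ‖bb‖ := by
    have h := norm_sub_le (a + bb) bb
    simpa using h
  constructor
  · rw [hr]
    have : ‖a‖ - ‖bb‖ ≤ ‖a + bb‖ := by linarith
    linarith
  · rw [hr]
    calc ‖a + bb‖ ≤ ‖a‖ + ‖bb‖ := norm_add_le _ _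
      _ ≤ Real.sqrt (1 + RIC X k0) * Real.sqrt T + ‖w‖ := by
          have := norm_sub_proj_le V (applyX X bu)
          rw [ha]
          linarith


end RRTPaper
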